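/- For all integers n ≥ 1, k ≥ 0, and ℓ ≥ 0, the sum E(n,k,ℓ) = Σ ∏_{t=0}^{k} N(i_t, j_t + 1), where the sum ranges over all compositions (i_0, i_1, …, i_k) of n into k+1 positive parts and all weak compositions (j_0, j_1, …, j_k) of ℓ into k+1 nonnegative parts, satisfies E(n,k,ℓ) = N_k(n, ℓ+1) = ((k+1)/n)·C(n, ℓ+1+k)·C(n, ℓ). -/

import Mathlib

open Finset

/-- generalized Narayana number `N_k(n, ℓ+1)` as a rational (0 when `n = 0`). -/
def tN (k n ℓ : ℕ) : ℚ := ((k : ℚ) + 1) * (n.choose (ℓ + k + 1)) * (n.choose ℓ) / n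

lemma choose_ratio (n r : ℕ) :
    ((r : ℚ) + 1) * (n.choose (r + 1)) = ((n : ℚ) - r) * (n.choose r) := by
  rcases le_or_gt r n with h | h
  · have h1 : (n.choose (r+1) * (r+1) : ℕ) = n.choose r * (n - r) := Nat.choose_succ_right_eq n r
    have h2 : ((n.choose (r+1) * (r+1) : ℕ) : ℚ) = ((n.choose r * (n - r) : ℕ) : ℚ) := by
      exact_mod_cast congrArg (Nat.cast : ℕ → ℚ) h1
    push_cast [Nat.cast_sub h] at h2
    linarith
  · rw [Nat.choose_eq_zero_of_lt h, Nat.choose_eq_zero_of_lt (h.trans (Nat.lt_succ_self r))]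
    ring

lemma K1 (k n ℓ : ℕ) : tN (k+1) (n+1) (ℓ+1)
    = tN k n (ℓ+1) + tN (k+1) n (ℓ+1) + tN (k+1) n ℓ + tN (k+2) n ℓ := by
  rcases Nat.eq_zero_or_pos n with rfl | hn
  · have h0 : (1:ℕ) < ℓ+1+(k+1)+1 := by omega
    simp [tN, Nat.choose_eq_zero_of_lt h0]
  · unfold tN
    have i1 : ℓ+1+(k+1)+1 = ℓ+k+3 := by omega
    have i2 : ℓ+1+k+1 = ℓ+k+2 := by omega
    have i3 : ℓ+(k+1)+1 = ℓ+k+2 := by omega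
    have i4 : ℓ+(k+2)+1 = ℓ+k+3 := by omega
    rw [i1, i2, i3, i4]
    have e1 : (((n+1).choose (ℓ+k+3) : ℕ) : ℚ)
        = (n.choose (ℓ+k+2) : ℚ) + (n.choose (ℓ+k+3) : ℚ) := by
      rw [show ℓ+k+3 = (ℓ+k+2)+1 by omega, Nat.choose_succ_succ]
      push_cast; ring
    have e2 : (((n+1).choose (ℓ+1) : ℕ) : ℚ)
        = (n.choose ℓ : ℚ) + (n.choose (ℓ+1) : ℚ) := by
      rw [Nat.choose_succ_succ]; push_cast; ring
    have hA := choose_ratio n (ℓ+k+2)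
    rw [show ℓ+k+2+1 = ℓ+k+3 by omega] at hA
    push_cast at hA
    have hC := choose_ratio n ℓ
    have hA' : ((n.choose (ℓ+k+3) : ℕ) : ℚ)
        = ((n:ℚ) - ℓ - k - 2) * (n.choose (ℓ+k+2)) / ((ℓ:ℚ)+k+3) := by
      have hd : ((ℓ:ℚ)+k+3) ≠ 0 := by positivity
      field_simp
      linear_combination hA
    have hC' : ((n.choose (ℓ+1) : ℕ) : ℚ)
        = ((n:ℚ) - ℓ) * (n.choose ℓ) / ((ℓ:ℚ)+1) := by
      have hd : ((ℓ:ℚ)+1) ≠ 0 := by positivity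
      field_simp
      linear_combination hC
    rw [e1, e2, hA', hC']
    have h1 : ((n:ℚ)) ≠ 0 := by exact_mod_cast hn.ne'
    have h2 : ((n:ℚ)+1) ≠ 0 := by positivity
    have h3 : ((ℓ:ℚ)+k+3) ≠ 0 := by positivity
    have h4 : ((ℓ:ℚ)+1) ≠ 0 := by positivity
    push_cast
    field_simp
    ring

lemma K2 (k n : ℕ) : tN (k+1) (n+1) 0 = tN k n 0 + tN (k+1) n 0 := by
  rcases Nat.eq_zero_or_pos n with rfl | hn
  · simp only [tN]
    rw [Nat.choose_eq_zero_of_lt (show 1 < 0+(k+1)+1 by omega)]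
    simp
  · unfold tN
    have i1 : 0+(k+1)+1 = k+2 := by omega
    have i2 : 0+k+1 = k+1 := by omega
    rw [i1, i2]
    have e1 : (((n+1).choose (k+2) : ℕ) : ℚ)
        = (n.choose (k+1) : ℚ) + (n.choose (k+2) : ℚ) := by
      rw [show k+2 = (k+1)+1 by omega, Nat.choose_succ_succ]
      push_cast; ring
    have hA := choose_ratio n (k+1)
    rw [show k+1+1 = k+2 by omega] at hA
    push_cast at hA
    have hA' : ((n.choose (k+2) : ℕ) : ℚ)
        = ((n:ℚ) - k - 1) * (n.choose (k+1)) / ((k:ℚ)+2) := by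
      have hd : ((k:ℚ)+2) ≠ 0 := by positivity
      field_simp
      linear_combination hA
    rw [e1, hA']
    have h1 : ((n:ℚ)) ≠ 0 := by exact_mod_cast hn.ne'
    have h2 : ((n:ℚ)+1) ≠ 0 := by positivity
    have h3 : ((k:ℚ)+2) ≠ 0 := by positivity
    simp only [Nat.choose_zero_right, Nat.cast_one]
    push_cast
    field_simp
    ring

lemma K3 (n ℓ : ℕ) : tN 0 (n+1) (ℓ+1) = tN 0 n (ℓ+1) + tN 0 n ℓ + tN 1 n ℓ := by
  rcases Nat.eq_zero_or_pos n with rfl | hn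
  · have h0 : (1:ℕ) < ℓ+1+0+1 := by omega
    simp [tN, Nat.choose_eq_zero_of_lt h0]
  · unfold tN
    have i1 : ℓ+1+0+1 = ℓ+2 := by omega
    have i2 : ℓ+0+1 = ℓ+1 := by omega
    have i3 : ℓ+1+1 = ℓ+2 := by omega
    rw [i1, i2, i3]
    have e1 : (((n+1).choose (ℓ+2) : ℕ) : ℚ)
        = (n.choose (ℓ+1) : ℚ) + (n.choose (ℓ+2) : ℚ) := by
      rw [show ℓ+2 = (ℓ+1)+1 by omega, Nat.choose_succ_succ]
      push_cast; ring
    have e2 : (((n+1).choose (ℓ+1) : ℕ) : ℚ)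
        = (n.choose ℓ : ℚ) + (n.choose (ℓ+1) : ℚ) := by
      rw [Nat.choose_succ_succ]; push_cast; ring
    have hA := choose_ratio n (ℓ+1)
    rw [show ℓ+1+1 = ℓ+2 by omega] at hA
    push_cast at hA
    have hB := choose_ratio n ℓ
    have hA' : ((n.choose (ℓ+2) : ℕ) : ℚ)
        = ((n:ℚ) - ℓ - 1) * (n.choose (ℓ+1)) / ((ℓ:ℚ)+2) := by
      have hd : ((ℓ:ℚ)+2) ≠ 0 := by positivity
      field_simp
      linear_combination hA
    have hB' : ((n.choose (ℓ+1) : ℕ) : ℚ)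
        = ((n:ℚ) - ℓ) * (n.choose ℓ) / ((ℓ:ℚ)+1) := by
      have hd : ((ℓ:ℚ)+1) ≠ 0 := by positivity
      field_simp
      linear_combination hB
    rw [e1, e2, hA', hB']
    have h1 : ((n:ℚ)) ≠ 0 := by exact_mod_cast hn.ne'
    have h2 : ((n:ℚ)+1) ≠ 0 := by positivity
    have h3 : ((ℓ:ℚ)+2) ≠ 0 := by positivity
    have h4 : ((ℓ:ℚ)+1) ≠ 0 := by positivity
    push_cast
    field_simp
    ring

lemma K4 (n : ℕ) : tN 0 (n+1) 0 = (if n = 0 then 1 else 0) + tN 0 n 0 := by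
  rcases Nat.eq_zero_or_pos n with rfl | hn
  · simp [tN]
  · have h1 : ((n:ℚ)) ≠ 0 := by exact_mod_cast hn.ne'
    have h2 : ((n:ℚ)+1) ≠ 0 := by positivity
    simp only [tN, Nat.choose_zero_right, Nat.choose_one_right, if_neg hn.ne']
    push_cast
    field_simp
    simp [Nat.choose_one_right]

lemma tN_zero (k ℓ : ℕ) : tN k 0 ℓ = 0 := by simp [tN]

/-- binary convolution of `tN 0` with `tN k`. -/
def cv (k n ℓ : ℕ) : ℚ :=
  ∑ p ∈ Finset.HasAntidiagonal.antidiagonal n, ∑ q ∈ Finset.HasAntidiagonal.antidiagonal ℓ,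
    tN 0 p.1 q.1 * tN k p.2 q.2

lemma ad_succ_sum (F : ℕ → ℕ → ℚ) (ℓ : ℕ) :
    ∑ q ∈ Finset.HasAntidiagonal.antidiagonal (ℓ+1), F q.1 q.2
      = F (ℓ+1) 0 + ∑ q ∈ Finset.HasAntidiagonal.antidiagonal ℓ, F q.1 (q.2+1) := by
  rw [Finset.Nat.antidiagonal_succ', Finset.sum_cons, Finset.sum_map]
  simp

lemma delta_sum (n : ℕ) (F : ℕ → ℚ) :
    ∑ p ∈ Finset.HasAntidiagonal.antidiagonal n, F p.1 * (if p.2 = 0 then (1:ℚ) else 0) = F n := by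
  rw [Finset.sum_eq_single_of_mem (n, 0) (by simp)]
  · simp
  · rintro ⟨b1, b2⟩ hb hne
    rcases Nat.eq_zero_or_pos b2 with rfl | h
    · exfalso; apply hne
      have : b1 + 0 = n := Finset.HasAntidiagonal.mem_antidiagonal.mp hb
      simp_all
    · rw [if_neg h.ne', mul_zero]

lemma cv_succ_left (k n ℓ : ℕ) :
    cv k (n+1) ℓ
      = ∑ p ∈ Finset.HasAntidiagonal.antidiagonal n, ∑ q ∈ Finset.HasAntidiagonal.antidiagonal ℓ,
          tN 0 p.1 q.1 * tN k (p.2+1) q.2 := by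
  unfold cv
  rw [ad_succ_sum (fun i m => ∑ q ∈ Finset.HasAntidiagonal.antidiagonal ℓ, tN 0 i q.1 * tN k m q.2) n]
  simp [tN_zero]

lemma Mconv : ∀ n k ℓ, cv k n ℓ = tN (k+1) n ℓ := by
  intro n
  induction n with
  | zero => intro k ℓ; simp [cv, Finset.Nat.antidiagonal_zero, tN_zero]
  | succ n IH =>
    intro k ℓ
    rw [cv_succ_left]
    rcases ℓ with _ | ℓ
    · -- ℓ = 0
      simp only [Finset.Nat.antidiagonal_zero, Finset.sum_singleton]
      rcases k with _ | k
      · have h1 : ∀ p ∈ Finset.HasAntidiagonal.antidiagonal n,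
            tN 0 p.1 0 * tN 0 (p.2+1) 0
              = tN 0 p.1 0 * (if p.2 = 0 then (1:ℚ) else 0) + tN 0 p.1 0 * tN 0 p.2 0 := by
          intro p _; rw [K4]; ring
        rw [Finset.sum_congr rfl h1, Finset.sum_add_distrib, delta_sum n (fun a => tN 0 a 0)]
        have h2 : (∑ p ∈ Finset.HasAntidiagonal.antidiagonal n, tN 0 p.1 0 * tN 0 p.2 0) = cv 0 n 0 := by
          simp [cv, Finset.Nat.antidiagonal_zero]
        rw [h2, IH 0 0, K2 0 n]
      · have h1 : ∀ p ∈ Finset.HasAntidiagonal.antidiagonal n,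
            tN 0 p.1 0 * tN (k+1) (p.2+1) 0
              = tN 0 p.1 0 * tN k p.2 0 + tN 0 p.1 0 * tN (k+1) p.2 0 := by
          intro p _; rw [K2]; ring
        rw [Finset.sum_congr rfl h1, Finset.sum_add_distrib]
        have h2 : (∑ p ∈ Finset.HasAntidiagonal.antidiagonal n, tN 0 p.1 0 * tN k p.2 0) = cv k n 0 := by
          simp [cv, Finset.Nat.antidiagonal_zero]
        have h3 : (∑ p ∈ Finset.HasAntidiagonal.antidiagonal n, tN 0 p.1 0 * tN (k+1) p.2 0)
            = cv (k+1) n 0 := by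
          simp [cv, Finset.Nat.antidiagonal_zero]
        rw [h2, h3, IH k 0, IH (k+1) 0, K2 (k+1) n]
    · -- ℓ = ℓ+1
      rcases k with _ | k
      · have h1 : ∀ p ∈ Finset.HasAntidiagonal.antidiagonal n,
            (∑ q ∈ Finset.HasAntidiagonal.antidiagonal (ℓ+1), tN 0 p.1 q.1 * tN 0 (p.2+1) q.2)
              = tN 0 p.1 (ℓ+1) * (if p.2 = 0 then (1:ℚ) else 0)
                + (∑ q ∈ Finset.HasAntidiagonal.antidiagonal (ℓ+1), tN 0 p.1 q.1 * tN 0 p.2 q.2)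
                + (∑ q ∈ Finset.HasAntidiagonal.antidiagonal ℓ, tN 0 p.1 q.1 * tN 0 p.2 q.2)
                + (∑ q ∈ Finset.HasAntidiagonal.antidiagonal ℓ, tN 0 p.1 q.1 * tN 1 p.2 q.2) := by
          intro p _
          rw [ad_succ_sum (fun a b => tN 0 p.1 a * tN 0 (p.2+1) b) ℓ,
            ad_succ_sum (fun a b => tN 0 p.1 a * tN 0 p.2 b) ℓ, K4]
          have h2 : ∀ q ∈ Finset.HasAntidiagonal.antidiagonal ℓ,
              tN 0 p.1 q.1 * tN 0 (p.2+1) (q.2+1)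
                = tN 0 p.1 q.1 * tN 0 p.2 (q.2+1) + tN 0 p.1 q.1 * tN 0 p.2 q.2
                  + tN 0 p.1 q.1 * tN 1 p.2 q.2 := by
            intro q _; rw [K3]; ring
          rw [Finset.sum_congr rfl h2, Finset.sum_add_distrib, Finset.sum_add_distrib]
          ring
        rw [Finset.sum_congr rfl h1]
        simp only [Finset.sum_add_distrib]
        rw [delta_sum n (fun a => tN 0 a (ℓ+1))]
        have e1 : (∑ p ∈ Finset.HasAntidiagonal.antidiagonal n,
            ∑ q ∈ Finset.HasAntidiagonal.antidiagonal (ℓ+1), tN 0 p.1 q.1 * tN 0 p.2 q.2) = cv 0 n (ℓ+1) := rfl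
        have e2 : (∑ p ∈ Finset.HasAntidiagonal.antidiagonal n,
            ∑ q ∈ Finset.HasAntidiagonal.antidiagonal ℓ, tN 0 p.1 q.1 * tN 0 p.2 q.2) = cv 0 n ℓ := rfl
        have e3 : (∑ p ∈ Finset.HasAntidiagonal.antidiagonal n,
            ∑ q ∈ Finset.HasAntidiagonal.antidiagonal ℓ, tN 0 p.1 q.1 * tN 1 p.2 q.2) = cv 1 n ℓ := rfl
        rw [e1, e2, e3, IH 0 (ℓ+1), IH 0 ℓ, IH 1 ℓ, K1 0 n ℓ]
      · have h1 : ∀ p ∈ Finset.HasAntidiagonal.antidiagonal n,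
            (∑ q ∈ Finset.HasAntidiagonal.antidiagonal (ℓ+1), tN 0 p.1 q.1 * tN (k+1) (p.2+1) q.2)
              = (∑ q ∈ Finset.HasAntidiagonal.antidiagonal (ℓ+1), tN 0 p.1 q.1 * tN k p.2 q.2)
                + (∑ q ∈ Finset.HasAntidiagonal.antidiagonal (ℓ+1), tN 0 p.1 q.1 * tN (k+1) p.2 q.2)
                + (∑ q ∈ Finset.HasAntidiagonal.antidiagonal ℓ, tN 0 p.1 q.1 * tN (k+1) p.2 q.2)
                + (∑ q ∈ Finset.HasAntidiagonal.antidiagonal ℓ, tN 0 p.1 q.1 * tN (k+2) p.2 q.2) := by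
          intro p _
          rw [ad_succ_sum (fun a b => tN 0 p.1 a * tN (k+1) (p.2+1) b) ℓ,
            ad_succ_sum (fun a b => tN 0 p.1 a * tN k p.2 b) ℓ,
            ad_succ_sum (fun a b => tN 0 p.1 a * tN (k+1) p.2 b) ℓ, K2]
          have h2 : ∀ q ∈ Finset.HasAntidiagonal.antidiagonal ℓ,
              tN 0 p.1 q.1 * tN (k+1) (p.2+1) (q.2+1)
                = tN 0 p.1 q.1 * tN k p.2 (q.2+1) + tN 0 p.1 q.1 * tN (k+1) p.2 (q.2+1)
                  + tN 0 p.1 q.1 * tN (k+1) p.2 q.2 + tN 0 p.1 q.1 * tN (k+2) p.2 q.2 := by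
            intro q _; rw [K1]; ring
          rw [Finset.sum_congr rfl h2, Finset.sum_add_distrib, Finset.sum_add_distrib,
            Finset.sum_add_distrib]
          ring
        rw [Finset.sum_congr rfl h1]
        simp only [Finset.sum_add_distrib]
        have e1 : (∑ p ∈ Finset.HasAntidiagonal.antidiagonal n,
            ∑ q ∈ Finset.HasAntidiagonal.antidiagonal (ℓ+1), tN 0 p.1 q.1 * tN k p.2 q.2) = cv k n (ℓ+1) := rfl
        have e2 : (∑ p ∈ Finset.HasAntidiagonal.antidiagonal n,
            ∑ q ∈ Finset.HasAntidiagonal.antidiagonal (ℓ+1), tN 0 p.1 q.1 * tN (k+1) p.2 q.2)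
              = cv (k+1) n (ℓ+1) := rfl
        have e3 : (∑ p ∈ Finset.HasAntidiagonal.antidiagonal n,
            ∑ q ∈ Finset.HasAntidiagonal.antidiagonal ℓ, tN 0 p.1 q.1 * tN (k+1) p.2 q.2) = cv (k+1) n ℓ := rfl
        have e4 : (∑ p ∈ Finset.HasAntidiagonal.antidiagonal n,
            ∑ q ∈ Finset.HasAntidiagonal.antidiagonal ℓ, tN 0 p.1 q.1 * tN (k+2) p.2 q.2) = cv (k+2) n ℓ := rfl
        rw [e1, e2, e3, e4, IH k (ℓ+1), IH (k+1) (ℓ+1), IH (k+1) ℓ, IH (k+2) ℓ, K1 (k+1) n ℓ]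

lemma sum_adT_succ (k n : ℕ) (f : (Fin (k+1+1) → ℕ) → ℚ) :
    ∑ x ∈ Finset.Nat.antidiagonalTuple (k+1+1) n, f x
      = ∑ p ∈ Finset.HasAntidiagonal.antidiagonal n,
          ∑ y ∈ Finset.Nat.antidiagonalTuple (k+1) p.2, f (Fin.cons p.1 y) := by
  rw [Finset.sum_sigma']
  refine Finset.sum_nbij'
    (fun x => (⟨(x 0, ∑ i : Fin (k+1), x i.succ), fun j : Fin (k+1) => x j.succ⟩ : Σ _ : ℕ × ℕ, (Fin (k+1) → ℕ)))
    (fun q => Fin.cons q.1.1 q.2) ?_ ?_ ?_ ?_ ?_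
  · intro x hx
    rw [Finset.Nat.mem_antidiagonalTuple] at hx
    rw [Finset.mem_sigma]
    constructor
    · rw [Finset.HasAntidiagonal.mem_antidiagonal]
      rw [← hx, Fin.sum_univ_succ (f := x)]
    · rw [Finset.Nat.mem_antidiagonalTuple]
  · intro q hq
    rw [Finset.mem_sigma] at hq
    rw [Finset.Nat.mem_antidiagonalTuple]
    have h1 := Finset.HasAntidiagonal.mem_antidiagonal.mp hq.1
    have h2 := Finset.Nat.mem_antidiagonalTuple.mp hq.2
    rw [Fin.sum_cons, h2, h1]
  · intro x hx
    exact Fin.cons_self_tail x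
  · intro q hq
    rw [Finset.mem_sigma] at hq
    have h2 := Finset.Nat.mem_antidiagonalTuple.mp hq.2
    rcases q with ⟨⟨a, b⟩, y⟩
    simp only [Fin.cons_zero, Fin.cons_succ]
    congr 1
    simp only [Prod.mk.injEq, true_and]
    exact h2
  · intro x hx
    congr 1
    exact (Fin.cons_self_tail x).symm

lemma E_eq : ∀ k n ℓ, (∑ i ∈ Finset.Nat.antidiagonalTuple (k+1) n,
    ∑ j ∈ Finset.Nat.antidiagonalTuple (k+1) ℓ, ∏ t, tN 0 (i t) (j t)) = tN k n ℓ := by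
  intro k
  induction k with
  | zero =>
    intro n ℓ
    simp [Finset.Nat.antidiagonalTuple_one]
  | succ k IH =>
    intro n ℓ
    rw [sum_adT_succ k n]
    have h1 : ∀ p ∈ Finset.HasAntidiagonal.antidiagonal n,
        (∑ x ∈ Finset.Nat.antidiagonalTuple (k+1) p.2,
          ∑ j ∈ Finset.Nat.antidiagonalTuple (k+1+1) ℓ,
            ∏ t : Fin (k+1+1), tN 0 ((Fin.cons p.1 x : Fin (k+1+1) → ℕ) t) (j t))
          = ∑ q ∈ Finset.HasAntidiagonal.antidiagonal ℓ, tN 0 p.1 q.1 *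
              (∑ x ∈ Finset.Nat.antidiagonalTuple (k+1) p.2,
                ∑ y ∈ Finset.Nat.antidiagonalTuple (k+1) q.2,
                  ∏ t : Fin (k+1), tN 0 (x t) (y t)) := by
      intro p _
      have h2 : ∀ x ∈ Finset.Nat.antidiagonalTuple (k+1) p.2,
          (∑ j ∈ Finset.Nat.antidiagonalTuple (k+1+1) ℓ,
            ∏ t : Fin (k+1+1), tN 0 ((Fin.cons p.1 x : Fin (k+1+1) → ℕ) t) (j t))
            = ∑ q ∈ Finset.HasAntidiagonal.antidiagonal ℓ,
                ∑ y ∈ Finset.Nat.antidiagonalTuple (k+1) q.2,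
                  tN 0 p.1 q.1 * ∏ t : Fin (k+1), tN 0 (x t) (y t) := by
        intro x _
        rw [sum_adT_succ k ℓ (fun j : Fin (k+1+1) → ℕ => ∏ t : Fin (k+1+1), tN 0 ((Fin.cons p.1 x : Fin (k+1+1) → ℕ) t) (j t))]
        refine Finset.sum_congr rfl fun q _ => Finset.sum_congr rfl fun y _ => ?_
        rw [Fin.prod_univ_succ]
        simp [Fin.cons_zero, Fin.cons_succ]
      rw [Finset.sum_congr rfl h2, Finset.sum_comm]
      refine Finset.sum_congr rfl fun q _ => ?_
      rw [Finset.mul_sum]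
      refine Finset.sum_congr rfl fun x _ => ?_
      rw [Finset.mul_sum]
    rw [Finset.sum_congr rfl h1]
    have h3 : ∀ p ∈ Finset.HasAntidiagonal.antidiagonal n, (∑ q ∈ Finset.HasAntidiagonal.antidiagonal ℓ, tN 0 p.1 q.1 *
        (∑ x ∈ Finset.Nat.antidiagonalTuple (k+1) p.2,
          ∑ y ∈ Finset.Nat.antidiagonalTuple (k+1) q.2,
            ∏ t : Fin (k+1), tN 0 (x t) (y t)))
          = ∑ q ∈ Finset.HasAntidiagonal.antidiagonal ℓ, tN 0 p.1 q.1 * tN k p.2 q.2 := by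
      intro p _
      exact Finset.sum_congr rfl fun q _ => by rw [IH p.2 q.2]
    rw [Finset.sum_congr rfl h3]
    exact Mconv n k ℓ

/-- **Lemma (generalized Narayana identity).** For integers `n ≥ 1`, `k ≥ 0`,
`ℓ ≥ 0`:  `E(n,k,ℓ) = Σ ∏_{t=0}^{k} N(i_t, j_t + 1) = N_k(n, ℓ+1)
= ((k+1)/n)·C(n, ℓ+1+k)·C(n, ℓ)`, where the sum ranges over all compositions
`(i_0,…,i_k)` of `n` into `k+1` positive parts and all weak compositions
`(j_0,…,j_k)` of `ℓ`, and `N(i, j+1) = (1/i)·C(i, j+1)·C(i, j)`. -/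
theorem narayana_identity (n k ℓ : ℕ) (hn : 1 ≤ n) :
    ∑ i ∈ (Finset.Nat.antidiagonalTuple (k + 1) n).filter (fun i => ∀ t, 0 < i t),
      ∑ j ∈ Finset.Nat.antidiagonalTuple (k + 1) ℓ,
        ∏ t : Fin (k + 1),
          (((i t).choose (j t + 1) * (i t).choose (j t) : ℕ) : ℚ) / (i t)
      = ((k + 1 : ℚ) / n) * (n.choose (ℓ + 1 + k)) * (n.choose ℓ) := by
  have hdrop : ∑ i ∈ (Finset.Nat.antidiagonalTuple (k + 1) n).filter (fun i => ∀ t, 0 < i t),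
      ∑ j ∈ Finset.Nat.antidiagonalTuple (k + 1) ℓ,
        ∏ t : Fin (k + 1),
          (((i t).choose (j t + 1) * (i t).choose (j t) : ℕ) : ℚ) / (i t)
      = ∑ i ∈ Finset.Nat.antidiagonalTuple (k + 1) n,
          ∑ j ∈ Finset.Nat.antidiagonalTuple (k + 1) ℓ,
            ∏ t : Fin (k + 1),
              (((i t).choose (j t + 1) * (i t).choose (j t) : ℕ) : ℚ) / (i t) := by
    refine Finset.sum_subset (Finset.filter_subset _ _) ?_
    intro x hx hxn
    rw [Finset.mem_filter, not_and] at hxn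
    have := hxn hx
    push_neg at this
    obtain ⟨t, ht⟩ := this
    have hxt : x t = 0 := Nat.le_zero.mp ht
    refine Finset.sum_eq_zero fun j _ => ?_
    refine Finset.prod_eq_zero (Finset.mem_univ t) ?_
    rw [hxt]
    simp
  rw [hdrop]
  have hconv : ∀ i j : ℕ, ((i.choose (j + 1) * i.choose j : ℕ) : ℚ) / (i : ℚ) = tN 0 i j := by
    intro i j
    simp only [tN, Nat.cast_ofNat, Nat.cast_zero]
    push_cast
    ring_nf
  have hsummand : ∀ x ∈ Finset.Nat.antidiagonalTuple (k + 1) n,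
      (∑ j ∈ Finset.Nat.antidiagonalTuple (k + 1) ℓ,
        ∏ t : Fin (k + 1),
          (((x t).choose (j t + 1) * (x t).choose (j t) : ℕ) : ℚ) / (x t))
        = ∑ j ∈ Finset.Nat.antidiagonalTuple (k + 1) ℓ, ∏ t : Fin (k+1), tN 0 (x t) (j t) := by
    intro x _
    exact Finset.sum_congr rfl fun j _ => Finset.prod_congr rfl fun t _ => hconv (x t) (j t)
  rw [Finset.sum_congr rfl hsummand, E_eq k n ℓ]
  rw [show ℓ + 1 + k = ℓ + k + 1 by omega]
  unfold tN
  ring
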